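/- Under the CBO setup, if γ ∈ (0,1), ξ > 0 and N ∈ ℕ are such that θ < 1, then for every s = 1,…,d: (i) lim_{k→∞} E[diam(y_k^s)] = 0; (ii) diam(y_k^s) → 0 almost surely as k → ∞; and (iii) max_{i,j=1:N} ‖x_k^i − x_k^j‖_∞ → 0 almost surely as k → ∞, where ‖·‖_∞ is the maximum norm on ℝ^d. -/

import Mathlib

open MeasureTheory ProbabilityTheory
open scoped RealInnerProductSpace

noncomputable section

/-- The diameter of a vector `y ∈ ℝ^N`: `max_i y_i - min_i y_i`. -/
def vdiam {N : ℕ} (y : Fin N → ℝ) : ℝ := (⨆ i, y i) - (⨅ i, y i)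

/-- Data of the discrete consensus-based optimization (CBO) method with noisy objective
function: drift parameter `γ`, noise level `ξ`, weight parameter `α`, particle positions
`x k i : Ω → ℝ^d`, diffusion noises `η k s i : Ω → ℝ`, and the values `fhat k i : Ω → ℝ`
returned by the stochastic oracle (i.e. `f̂(x_k^i, ω_k^i)`). -/
structure CBOData (N d : ℕ) (Ω : Type) [MeasurableSpace Ω] where
  γ : ℝ
  ξ : ℝ
  α : ℝ
  x : ℕ → Fin N → Ω → EuclideanSpace ℝ (Fin d)
  η : ℕ → Fin d → Fin N → Ω → ℝ
  fhat : ℕ → Fin N → Ω → ℝ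

namespace CBOData

variable {N d : ℕ} {Ω : Type} [MeasurableSpace Ω]

/-- The noisy consensus point
`x̂_k^α = (Σ_i x_k^i e^{-α f̂(x_k^i, ω_k^i)}) / (Σ_i e^{-α f̂(x_k^i, ω_k^i)})`. -/
def xhat (C : CBOData N d Ω) (k : ℕ) (ω : Ω) : EuclideanSpace ℝ (Fin d) :=
  (∑ i, Real.exp (-C.α * C.fhat k i ω))⁻¹ •
    ∑ i, Real.exp (-C.α * C.fhat k i ω) • C.x k i ω

/-- The vector of `s`-th components of the particles: `y_k^s = (x_{k,s}^1, …, x_{k,s}^N)`. -/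
def y (C : CBOData N d Ω) (k : ℕ) (s : Fin d) (ω : Ω) : Fin N → ℝ :=
  fun i => C.x k i ω s

/-- The contraction constant `θ = 1 - γ + 8 ξ (log(√2 N))^{1/2}`. -/
def th (C : CBOData N d Ω) : ℝ :=
  1 - C.γ + 8 * C.ξ * Real.sqrt (Real.log (Real.sqrt 2 * N))

/-- The σ-algebra generated by the noises of iteration `k`. -/
def noiseσ (C : CBOData N d Ω) (k : ℕ) : MeasurableSpace Ω :=
  ⨆ s : Fin d, ⨆ i : Fin N, MeasurableSpace.comap (C.η k s i) inferInstance

/-- The σ-algebra generated by the particle positions and the oracle evaluations up to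
iteration `k`, together with the noises of iterations `< k`. -/
def histσ (C : CBOData N d Ω) (k : ℕ) : MeasurableSpace Ω :=
  ((⨆ (l : ℕ) (_ : l ≤ k), ⨆ i : Fin N,
      (MeasurableSpace.comap (C.x l i) inferInstance ⊔
        MeasurableSpace.comap (C.fhat l i) inferInstance)) ⊔
    ⨆ (l : ℕ) (_ : l < k), ⨆ s : Fin d, ⨆ i : Fin N,
      MeasurableSpace.comap (C.η l s i) inferInstance)

/-- `σ_k`: the σ-algebra generated by `{x_l^i : l ≤ k}` and `{η_{l,s}^i : l ≤ k}`. -/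
def sigmak (C : CBOData N d Ω) (k : ℕ) : MeasurableSpace Ω :=
  ((⨆ (l : ℕ) (_ : l ≤ k), ⨆ i : Fin N,
      MeasurableSpace.comap (C.x l i) inferInstance) ⊔
    ⨆ (l : ℕ) (_ : l ≤ k), ⨆ s : Fin d, ⨆ i : Fin N,
      MeasurableSpace.comap (C.η l s i) inferInstance)

/-- The hypotheses of the CBO setup: `N, d ≥ 1`, `γ ∈ (0,1)`, `ξ > 0`, `α > 0`,
measurability of all the random variables, the noises are i.i.d. centered Gaussian with
variance `ξ²` and, at each iteration `k`, the family of iteration-`k` noises is independent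
of the particle positions and oracle evaluations up to iteration `k`; finally the particles
evolve according to the (componentwise) CBO update rule. -/
structure Hyp (C : CBOData N d Ω) (P : Measure Ω) : Prop where
  hN : 1 ≤ N
  hd : 1 ≤ d
  hγ : C.γ ∈ Set.Ioo (0:ℝ) 1
  hξ : 0 < C.ξ
  hα : 0 < C.α
  meas_x : ∀ k i, Measurable (C.x k i)
  meas_η : ∀ k s i, Measurable (C.η k s i)
  meas_fhat : ∀ k i, Measurable (C.fhat k i)
  η_gauss : ∀ k s i, Measure.map (C.η k s i) P = gaussianReal 0 ⟨C.ξ ^ 2, sq_nonneg C.ξ⟩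
  η_iid : iIndepFun
    (fun p : ℕ × Fin d × Fin N => C.η p.1 p.2.1 p.2.2) P
  η_indep_hist : ∀ k, Indep (C.noiseσ k) (C.histσ k) P
  evol : ∀ k i s ω, C.x (k+1) i ω s =
    C.x k i ω s - C.γ * (C.x k i ω s - C.xhat k ω s)
      - (C.x k i ω s - C.xhat k ω s) * C.η k s i ω

end CBOData

lemma measurable_isup' {Ω' : Type*} {m : MeasurableSpace Ω'} {ι : Type*} [Countable ι]
    {f : ι → Ω' → ℝ} (hf : ∀ i, Measurable[m] (f i)) :
    Measurable[m] fun ω => ⨆ i, f i ω := Measurable.iSup hf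

lemma measurable_iinf' {Ω' : Type*} {m : MeasurableSpace Ω'} {ι : Type*} [Countable ι]
    {f : ι → Ω' → ℝ} (hf : ∀ i, Measurable[m] (f i)) :
    Measurable[m] fun ω => ⨅ i, f i ω := Measurable.iInf hf

open Filter
/- ===================== auxiliary lemmas ===================== -/

section vdiamAux

variable {n : ℕ} [Nonempty (Fin n)]

lemma vdiam_nonneg (y : Fin n → ℝ) : 0 ≤ vdiam y := by
  have i : Fin n := Classical.arbitrary _
  have h1 : y i ≤ ⨆ j, y j := le_ciSup ((Set.finite_range y).bddAbove) i
  have h2 : (⨅ j, y j) ≤ y i := ciInf_le ((Set.finite_range y).bddBelow) i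
  unfold vdiam; linarith

lemma sub_le_vdiam (y : Fin n → ℝ) (i j : Fin n) : y i - y j ≤ vdiam y := by
  have h1 : y i ≤ ⨆ l, y l := le_ciSup ((Set.finite_range y).bddAbove) i
  have h2 : (⨅ l, y l) ≤ y j := ciInf_le ((Set.finite_range y).bddBelow) j
  unfold vdiam; linarith

lemma abs_sub_le_vdiam (y : Fin n → ℝ) (i j : Fin n) : |y i - y j| ≤ vdiam y :=
  abs_sub_le_iff.2 ⟨sub_le_vdiam y i j, by simpa using sub_le_vdiam y j i⟩

lemma vdiam_le {y : Fin n → ℝ} {c : ℝ} (h : ∀ i j, y i - y j ≤ c) : vdiam y ≤ c := by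
  obtain ⟨i0, hi0⟩ := exists_eq_ciSup_of_finite (f := y)
  obtain ⟨j0, hj0⟩ := exists_eq_ciInf_of_finite (f := y)
  unfold vdiam
  rw [← hi0, ← hj0]
  exact h i0 j0

end vdiamAux

section gaussAux
open scoped NNReal ENNReal

lemma gauss_key (v : ℝ≥0) (hv : v ≠ 0) (t x : ℝ) :
    Real.exp (t * x) * gaussianPDFReal 0 v x
      = Real.exp (t^2 * v / 2) * gaussianPDFReal (t*v) v x := by
  have hv0 : (0:ℝ) < v := NNReal.coe_pos.2 (pos_iff_ne_zero.2 hv)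
  simp only [gaussianPDFReal]
  rw [mul_left_comm, ← Real.exp_add, mul_left_comm, ← Real.exp_add]
  congr 1
  field_simp
  ring

lemma gauss_pdf_nnreal (v : ℝ≥0) (hv : v ≠ 0) :
    gaussianReal 0 v
      = MeasureTheory.volume.withDensity
          (fun x => ((Real.toNNReal (gaussianPDFReal 0 v x) : ℝ≥0) : ℝ≥0∞)) := by
  rw [gaussianReal_of_var_ne_zero 0 hv]
  congr 1

lemma gauss_exp_integrable (v : ℝ≥0) (hv : v ≠ 0) (t : ℝ) :
    Integrable (fun x => Real.exp (t * x)) (gaussianReal 0 v) := by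
  rw [gauss_pdf_nnreal v hv]
  rw [integrable_withDensity_iff_integrable_smul
    ((measurable_gaussianPDFReal 0 v).real_toNNReal)]
  have : ∀ x : ℝ, (Real.toNNReal (gaussianPDFReal 0 v x)) • Real.exp (t*x)
      = Real.exp (t^2 * v / 2) * gaussianPDFReal (t*v) v x := by
    intro x
    rw [NNReal.smul_def, smul_eq_mul, Real.coe_toNNReal _ (gaussianPDFReal_nonneg 0 v x),
      mul_comm, gauss_key v hv t x]
  rw [funext this]
  exact (integrable_gaussianPDFReal (t*v) v).const_mul _

lemma gauss_exp_integral (v : ℝ≥0) (hv : v ≠ 0) (t : ℝ) :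
    ∫ x, Real.exp (t * x) ∂(gaussianReal 0 v) = Real.exp (t^2 * v / 2) := by
  rw [gauss_pdf_nnreal v hv]
  rw [integral_withDensity_eq_integral_smul
    ((measurable_gaussianPDFReal 0 v).real_toNNReal)]
  have : ∀ x : ℝ, (Real.toNNReal (gaussianPDFReal 0 v x)) • Real.exp (t*x)
      = Real.exp (t^2 * v / 2) * gaussianPDFReal (t*v) v x := by
    intro x
    rw [NNReal.smul_def, smul_eq_mul, Real.coe_toNNReal _ (gaussianPDFReal_nonneg 0 v x),
      mul_comm, gauss_key v hv t x]
  rw [funext this]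
  rw [MeasureTheory.integral_const_mul, integral_gaussianPDFReal_eq_one (t*v) hv, mul_one]

variable {Ω : Type} [MeasurableSpace Ω] (P : Measure Ω) [IsProbabilityMeasure P]

omit [IsProbabilityMeasure P] in
lemma gauss_exp_rv {X : Ω → ℝ} (hX : Measurable X) {v : ℝ≥0} (hv : v ≠ 0)
    (hmap : Measure.map X P = gaussianReal 0 v) (t : ℝ) :
    Integrable (fun ω => Real.exp (t * X ω)) P ∧
      ∫ ω, Real.exp (t * X ω) ∂P = Real.exp (t^2 * v / 2) := by
  have hg : Integrable (fun x => Real.exp (t * x)) (Measure.map X P) := by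
    rw [hmap]; exact gauss_exp_integrable v hv t
  have hm : AEStronglyMeasurable (fun x => Real.exp (t * x)) (Measure.map X P) :=
    (Real.measurable_exp.comp (measurable_id.const_mul t)).aestronglyMeasurable
  constructor
  · exact (integrable_map_measure hm hX.aemeasurable).1 hg
  · have h := integral_map (φ := X) (f := fun x => Real.exp (t * x)) hX.aemeasurable hm
    rw [hmap] at h
    rw [← h]
    exact gauss_exp_integral v hv t

lemma EM_bound {N : ℕ} (hN : 1 ≤ N) {ξ : ℝ} (hξ : 0 < ξ)
    (η : Fin N → Ω → ℝ) (hmeas : ∀ i, Measurable (η i))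
    (hmap : ∀ i, Measure.map (η i) P = gaussianReal 0 ⟨ξ ^ 2, sq_nonneg ξ⟩) :
    Integrable (fun ω => ⨆ i, |η i ω|) P ∧
      ∫ ω, (⨆ i, |η i ω|) ∂P ≤ 3 * ξ * Real.sqrt (Real.log (Real.sqrt 2 * N)) := by
  haveI : Nonempty (Fin N) := Fin.pos_iff_nonempty.mp hN
  set v : ℝ≥0 := ⟨ξ ^ 2, sq_nonneg ξ⟩ with hv_def
  have hv : v ≠ 0 := by
    intro h
    have : ξ ^ 2 = 0 := congrArg (fun x : ℝ≥0 => (x:ℝ)) h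
    nlinarith
  set L0 : ℝ := Real.log (Real.sqrt 2 * N) with hL0_def
  have hN1 : (1:ℝ) ≤ (N:ℝ) := by exact_mod_cast hN
  have hs2 : (1:ℝ) < Real.sqrt 2 := by
    rw [show (1:ℝ) = Real.sqrt 1 by simp]
    exact Real.sqrt_lt_sqrt (by norm_num) (by norm_num)
  have hL0 : 0 < L0 := Real.log_pos (by nlinarith)
  set lam : ℝ := Real.sqrt (2 * L0) / ξ with hlam_def
  have hlam : 0 < lam := div_pos (Real.sqrt_pos.2 (by linarith)) hξ
  have hlamsq : lam ^ 2 * ξ ^ 2 = 2 * L0 := by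
    rw [hlam_def, div_pow, Real.sq_sqrt (by linarith : (0:ℝ) ≤ 2 * L0)]
    field_simp
  set M : Ω → ℝ := fun ω => ⨆ i, |η i ω| with hM_def
  set Z : Ω → ℝ := fun ω => ∑ i, (Real.exp (lam * η i ω) + Real.exp (-lam * η i ω)) with hZ_def
  have hMmeas : Measurable M := Measurable.iSup fun i => (hmeas i).abs
  have hZint : Integrable Z P := by
    apply integrable_finset_sum
    intro i _
    exact ((gauss_exp_rv P (hmeas i) hv (hmap i) lam).1).add
      ((gauss_exp_rv P (hmeas i) hv (hmap i) (-lam)).1)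
  have hZval : ∫ ω, Z ω ∂P = (N : ℝ) * (2 * Real.exp L0) := by
    have hfs := integral_finset_sum (μ := P) Finset.univ
      (f := fun (i : Fin N) ω => Real.exp (lam * η i ω) + Real.exp (-lam * η i ω))
      (fun i _ => ((gauss_exp_rv P (hmeas i) hv (hmap i) lam).1).add
        ((gauss_exp_rv P (hmeas i) hv (hmap i) (-lam)).1))
    simp only [hZ_def]
    rw [hfs]
    have : ∀ i : Fin N, ∫ ω, (Real.exp (lam * η i ω) + Real.exp (-lam * η i ω)) ∂P
        = 2 * Real.exp L0 := by
      intro i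
      rw [integral_add ((gauss_exp_rv P (hmeas i) hv (hmap i) lam).1)
        ((gauss_exp_rv P (hmeas i) hv (hmap i) (-lam)).1),
        (gauss_exp_rv P (hmeas i) hv (hmap i) lam).2,
        (gauss_exp_rv P (hmeas i) hv (hmap i) (-lam)).2]
      have h1 : lam ^ 2 * (v:ℝ) / 2 = L0 := by
        have : (v:ℝ) = ξ ^ 2 := rfl
        rw [this]; rw [mul_comm] at hlamsq ⊢; nlinarith [hlamsq]
      have h2 : (-lam) ^ 2 * (v:ℝ) / 2 = L0 := by rw [neg_pow]; simpa using h1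
      rw [h1, h2]; ring
    rw [Finset.sum_congr rfl (fun i _ => this i)]
    simp [mul_comm]
  have hMnonneg : ∀ ω, 0 ≤ M ω := by
    intro ω
    exact le_trans (abs_nonneg _)
      (le_ciSup (f := fun i => |η i ω|) ((Set.finite_range _).bddAbove) ⟨0, hN⟩)
  have hMZ : ∀ ω, Real.exp (lam * M ω) ≤ Z ω := by
    intro ω
    obtain ⟨i0, hi0⟩ := exists_eq_ciSup_of_finite (f := fun i => |η i ω|)
    have h1 : Real.exp (lam * M ω) = Real.exp (lam * |η i0 ω|) := by rw [hM_def]; simp [← hi0]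
    have h2 : Real.exp (lam * |η i0 ω|) ≤ Real.exp (lam * η i0 ω) + Real.exp (-lam * η i0 ω) := by
      rcases abs_cases (η i0 ω) with ⟨h, _⟩ | ⟨h, _⟩
      · rw [h]; exact le_add_of_nonneg_right (Real.exp_pos _).le
      · rw [h, mul_neg, ← neg_mul]; exact le_add_of_nonneg_left (Real.exp_pos _).le
    refine h1.le.trans (h2.trans ?_)
    exact Finset.single_le_sum (f := fun i => Real.exp (lam * η i ω) + Real.exp (-lam * η i ω))
      (fun i _ => by positivity) (Finset.mem_univ i0)
  have hexpM_int : Integrable (fun ω => Real.exp (lam * M ω)) P := by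
    refine Integrable.mono' hZint
      ((Real.measurable_exp.comp (hMmeas.const_mul lam)).aestronglyMeasurable)
      (ae_of_all _ fun ω => ?_)
    rw [Real.norm_eq_abs, abs_of_pos (Real.exp_pos _)]
    exact hMZ ω
  have hM_int : Integrable M P := by
    refine Integrable.mono' (hZint.div_const lam) hMmeas.aestronglyMeasurable
      (ae_of_all _ fun ω => ?_)
    rw [Real.norm_eq_abs, abs_of_nonneg (hMnonneg ω)]
    rw [le_div_iff₀ hlam, mul_comm]
    calc lam * M ω ≤ Real.exp (lam * M ω) := by
          linarith [Real.add_one_le_exp (lam * M ω)]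
      _ ≤ Z ω := hMZ ω
  refine ⟨hM_int, ?_⟩
  set c : ℝ := (N : ℝ) * (2 * Real.exp L0) with hc_def
  have hc : 0 < c := by positivity
  have hptwise : ∀ ω, lam * M ω - Real.log c ≤ Real.exp (lam * M ω) / c - 1 := by
    intro ω
    have := Real.log_le_sub_one_of_pos (x := Real.exp (lam * M ω) / c) (by positivity)
    rwa [Real.log_div (Real.exp_pos _).ne' hc.ne', Real.log_exp] at this
  have hint : lam * (∫ ω, M ω ∂P) - Real.log c ≤ (∫ ω, Real.exp (lam * M ω) ∂P) / c - 1 := by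
    have hL : ∫ ω, (lam * M ω - Real.log c) ∂P = lam * (∫ ω, M ω ∂P) - Real.log c := by
      rw [integral_sub (hM_int.const_mul lam) (integrable_const _), integral_const,
        MeasureTheory.integral_const_mul]
      simp [measure_univ]
    have hR : ∫ ω, (Real.exp (lam * M ω) / c - 1) ∂P
        = (∫ ω, Real.exp (lam * M ω) ∂P) / c - 1 := by
      rw [integral_sub (hexpM_int.div_const c) (integrable_const _), integral_div, integral_const]
      simp [measure_univ]
    have h' := integral_mono ((hM_int.const_mul lam).sub (integrable_const (Real.log c)))
      ((hexpM_int.div_const c).sub (integrable_const 1)) hptwise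
    simp only [Pi.sub_apply] at h'
    rwa [hL, hR] at h'
  have hZc : (∫ ω, Real.exp (lam * M ω) ∂P) / c - 1 ≤ 0 := by
    have h1 : ∫ ω, Real.exp (lam * M ω) ∂P ≤ ∫ ω, Z ω ∂P :=
      integral_mono hexpM_int hZint hMZ
    rw [hZval] at h1
    have h2 : (∫ ω, Real.exp (lam * M ω) ∂P) / c ≤ c / c := by gcongr
    rw [div_self hc.ne'] at h2
    linarith
  have hEM : lam * (∫ ω, M ω ∂P) ≤ Real.log c := by linarith
  have hlogc : Real.log c ≤ 3 * L0 := by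
    have hlogN : 0 ≤ Real.log N := Real.log_nonneg hN1
    have hNne : (N:ℝ) ≠ 0 := by linarith
    have hL0eq : L0 = Real.log (Real.sqrt 2) + Real.log N :=
      Real.log_mul (by positivity) hNne
    have hlog2 : Real.log (Real.sqrt 2) = Real.log 2 / 2 := by
      rw [Real.log_sqrt (by norm_num)]
    have : Real.log c = Real.log N + Real.log 2 + L0 := by
      rw [hc_def, Real.log_mul hNne (by positivity),
        Real.log_mul (by norm_num) (Real.exp_pos _).ne', Real.log_exp]
      ring
    rw [this]
    linarith [hL0eq, hlogN, hlog2]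
  have hEM2 : ∫ ω, M ω ∂P ≤ 3 * L0 / lam := by
    rw [le_div_iff₀ hlam, mul_comm]
    exact hEM.trans hlogc
  refine hEM2.trans ?_
  set u : ℝ := Real.sqrt L0 with hu_def
  have hu : 0 < u := Real.sqrt_pos.2 hL0
  have hu2 : u ^ 2 = L0 := Real.sq_sqrt hL0.le
  have hsq : Real.sqrt (2 * L0) = Real.sqrt 2 * u := Real.sqrt_mul (by norm_num) _
  rw [hlam_def, hsq, div_div_eq_mul_div, div_le_iff₀ (by positivity)]
  have hrw : 3 * ξ * u * (Real.sqrt 2 * u) = 3 * ξ * Real.sqrt 2 * L0 := by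
    rw [← hu2]; ring
  rw [hrw]
  nlinarith [mul_pos (mul_pos hξ hL0) (sub_pos.mpr hs2)]

end gaussAux

/-- Under the CBO setup, if `θ < 1` then for every component `s`:
(i) `E[diam(y_k^s)] → 0`; (ii) `diam(y_k^s) → 0` a.s.;
(iii) `max_{i,j} ‖x_k^i - x_k^j‖_∞ → 0` a.s. (maximum norm on `ℝ^d`). -/
theorem stmt7 {N d : ℕ} {Ω : Type} [MeasurableSpace Ω] (P : Measure Ω)
    [IsProbabilityMeasure P] (C : CBOData N d Ω) (hC : C.Hyp P)
    (hint : ∀ s : Fin d, Integrable (fun ω => vdiam (C.y 0 s ω)) P)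
    (hθ : C.th < 1) :
    (∀ s : Fin d,
        Tendsto (fun k => ∫ ω, vdiam (C.y k s ω) ∂P) atTop (nhds 0)) ∧
      (∀ s : Fin d, ∀ᵐ ω ∂P,
        Tendsto (fun k => vdiam (C.y k s ω)) atTop (nhds 0)) ∧
      (∀ᵐ ω ∂P,
        Tendsto (fun k => ⨆ i : Fin N, ⨆ j : Fin N, ⨆ s : Fin d,
          |C.x k i ω s - C.x k j ω s|) atTop (nhds 0)) := by
  haveI hNe : Nonempty (Fin N) := Fin.pos_iff_nonempty.mp hC.hN
  haveI hde : Nonempty (Fin d) := Fin.pos_iff_nonempty.mp hC.hd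
  have hγ0 := hC.hγ.1
  have hγ1 := hC.hγ.2
  have hθ0 : 0 < C.th := by
    have h8 : 0 ≤ 8 * C.ξ * Real.sqrt (Real.log (Real.sqrt 2 * N)) := by
      have := hC.hξ
      positivity
    unfold CBOData.th
    linarith
  have hxs : ∀ k i (s : Fin d), Measurable fun ω => C.x k i ω s :=
    fun k i s => (measurable_pi_apply s).comp ((WithLp.measurable_ofLp 2 _).comp (hC.meas_x k i))
  have hD_meas : ∀ (k) (s : Fin d), Measurable fun ω => vdiam (C.y k s ω) := by
    intro k s
    unfold vdiam CBOData.y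
    exact (Measurable.iSup fun i => hxs k i s).sub (Measurable.iInf fun i => hxs k i s)
  -- consensus point stays within the range of the particles, componentwise
  have hxhat : ∀ k ω (s : Fin d),
      (⨅ i, C.x k i ω s) ≤ C.xhat k ω s ∧ C.xhat k ω s ≤ ⨆ i, C.x k i ω s := by
    intro k ω s
    set w : Fin N → ℝ := fun i => Real.exp (-C.α * C.fhat k i ω) with hw_def
    have hw : ∀ i, 0 < w i := fun i => Real.exp_pos _
    have hsum : 0 < ∑ i, w i := Finset.sum_pos (fun i _ => hw i) Finset.univ_nonempty
    have happ : C.xhat k ω s = (∑ i, w i)⁻¹ * ∑ i, w i * C.x k i ω s := by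
      show ((∑ i, w i)⁻¹ • ∑ i, w i • C.x k i ω) s = _
      have h2 : (∑ i, w i • C.x k i ω) s = ∑ i, (w i • C.x k i ω) s :=
        by rw [WithLp.ofLp_sum, Finset.sum_apply]
      have h1 : ((∑ i, w i)⁻¹ • ∑ i, w i • C.x k i ω) s
          = (∑ i, w i)⁻¹ * (∑ i, w i • C.x k i ω) s := rfl
      rw [h1, h2]; rfl
    constructor
    · have hlow : ∀ i ∈ Finset.univ, w i * (⨅ j, C.x k j ω s) ≤ w i * C.x k i ω s := fun i _ =>
        mul_le_mul_of_nonneg_left (ciInf_le ((Set.finite_range _).bddBelow) i) (hw i).le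
      have hs2 := Finset.sum_le_sum hlow
      rw [← Finset.sum_mul] at hs2
      rw [happ]
      calc (⨅ i, C.x k i ω s) = (∑ i, w i)⁻¹ * ((∑ i, w i) * (⨅ i, C.x k i ω s)) := by
            field_simp
        _ ≤ (∑ i, w i)⁻¹ * ∑ i, w i * C.x k i ω s :=
            mul_le_mul_of_nonneg_left hs2 (inv_nonneg.2 hsum.le)
    · have hupp : ∀ i ∈ Finset.univ, w i * C.x k i ω s ≤ w i * (⨆ j, C.x k j ω s) := fun i _ =>
        mul_le_mul_of_nonneg_left (le_ciSup (f := fun m => C.x k m ω s)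
          ((Set.finite_range _).bddAbove) i) (hw i).le
      have hs2 := Finset.sum_le_sum hupp
      rw [← Finset.sum_mul] at hs2
      rw [happ]
      calc (∑ i, w i)⁻¹ * ∑ i, w i * C.x k i ω s
          ≤ (∑ i, w i)⁻¹ * ((∑ i, w i) * (⨆ i, C.x k i ω s)) :=
            mul_le_mul_of_nonneg_left hs2 (inv_nonneg.2 hsum.le)
        _ = ⨆ i, C.x k i ω s := by field_simp
  -- the per-component contraction estimate
  have main : ∀ s : Fin d, ∀ k : ℕ,
      Integrable (fun ω => vdiam (C.y k s ω)) P ∧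
        ∫ ω, vdiam (C.y k s ω) ∂P ≤ C.th ^ k * ∫ ω, vdiam (C.y 0 s ω) ∂P := by
    intro s
    set M : ℕ → Ω → ℝ := fun k ω => ⨆ i, |C.η k s i ω| with hM_def
    set G : ℕ → Ω → ℝ := fun k ω => 1 - C.γ + 2 * M k ω with hG_def
    have hEM : ∀ k, Integrable (M k) P ∧
        ∫ ω, M k ω ∂P ≤ 3 * C.ξ * Real.sqrt (Real.log (Real.sqrt 2 * N)) :=
      fun k => EM_bound P hC.hN hC.hξ (fun i => C.η k s i)
        (fun i => hC.meas_η k s i) (fun i => hC.η_gauss k s i)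
    have hM0 : ∀ k ω, 0 ≤ M k ω := fun k ω =>
      le_trans (abs_nonneg _) (le_ciSup (f := fun i => |C.η k s i ω|)
        ((Set.finite_range _).bddAbove) (Classical.arbitrary _))
    have hG0 : ∀ k ω, 0 ≤ G k ω := fun k ω => by
      have := hM0 k ω; simp only [hG_def]; linarith
    have hGint : ∀ k, Integrable (G k) P := fun k =>
      (integrable_const _).add (((hEM k).1).const_mul 2)
    have hGE : ∀ k, ∫ ω, G k ω ∂P ≤ C.th := by
      intro k
      have h1 : ∫ ω, G k ω ∂P = (1 - C.γ) + 2 * ∫ ω, M k ω ∂P := by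
        simp only [hG_def]
        rw [integral_add (integrable_const _) (((hEM k).1).const_mul 2),
          integral_const, MeasureTheory.integral_const_mul]
        simp [measure_univ]
      have h2 := (hEM k).2
      have h3 : 0 ≤ C.ξ * Real.sqrt (Real.log (Real.sqrt 2 * N)) := by
        have := hC.hξ; positivity
      rw [h1]; unfold CBOData.th; linarith
    have hcontr : ∀ k ω, vdiam (C.y (k+1) s ω) ≤ G k ω * vdiam (C.y k s ω) := by
      intro k ω
      apply vdiam_le
      intro i j
      set D := vdiam (C.y k s ω) with hD_def
      set cc := C.xhat k ω s with hcc_def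
      have hD0 : 0 ≤ D := vdiam_nonneg _
      have hDeq : D = (⨆ l, C.x k l ω s) - ⨅ l, C.x k l ω s := rfl
      have habs : ∀ l, |C.x k l ω s - cc| ≤ D := by
        intro l
        have h1 : C.x k l ω s ≤ ⨆ m, C.x k m ω s :=
          le_ciSup (f := fun m => C.x k m ω s) ((Set.finite_range _).bddAbove) l
        have h2 : (⨅ m, C.x k m ω s) ≤ C.x k l ω s :=
          ciInf_le (f := fun m => C.x k m ω s) ((Set.finite_range _).bddBelow) l
        have h3 := (hxhat k ω s).1
        have h4 := (hxhat k ω s).2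
        rw [abs_le]
        constructor
        · linarith
        · linarith
      have hei : ∀ l, |C.η k s l ω| ≤ M k ω := fun l =>
        le_ciSup (f := fun m => |C.η k s m ω|) ((Set.finite_range _).bddAbove) l
      have hMω := hM0 k ω
      have hij : C.x k i ω s - C.x k j ω s ≤ D := sub_le_vdiam (C.y k s ω) i j
      have t1 : -((C.x k i ω s - cc) * C.η k s i ω) ≤ D * M k ω := by
        calc -((C.x k i ω s - cc) * C.η k s i ω)
            ≤ |(C.x k i ω s - cc) * C.η k s i ω| := neg_le_abs _
          _ = |C.x k i ω s - cc| * |C.η k s i ω| := abs_mul _ _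
          _ ≤ D * M k ω := mul_le_mul (habs i) (hei i) (abs_nonneg _) hD0
      have t2 : (C.x k j ω s - cc) * C.η k s j ω ≤ D * M k ω := by
        calc (C.x k j ω s - cc) * C.η k s j ω
            ≤ |(C.x k j ω s - cc) * C.η k s j ω| := le_abs_self _
          _ = |C.x k j ω s - cc| * |C.η k s j ω| := abs_mul _ _
          _ ≤ D * M k ω := mul_le_mul (habs j) (hei j) (abs_nonneg _) hD0
      have t3 : (1 - C.γ) * (C.x k i ω s - C.x k j ω s) ≤ (1 - C.γ) * D :=
        mul_le_mul_of_nonneg_left hij (by linarith)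
      have hexp : G k ω * D = (1 - C.γ) * D + D * M k ω + D * M k ω := by
        simp only [hG_def]; ring
      show C.x (k+1) i ω s - C.x (k+1) j ω s ≤ G k ω * D
      rw [hC.evol k i s ω, hC.evol k j s ω, hexp, ← hcc_def]
      nlinarith [t1, t2, t3]
    have hindep : ∀ k, IndepFun (G k) (fun ω => vdiam (C.y k s ω)) P := by
      intro k
      have hMn : Measurable[C.noiseσ k] (M k) := by
        apply measurable_isup'
        intro i
        have hη : Measurable[C.noiseσ k] (C.η k s i) := by
          rw [measurable_iff_comap_le]
          exact le_iSup_of_le s (le_iSup_of_le i le_rfl)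
        exact measurable_abs.comp hη
      have hGn : Measurable[C.noiseσ k] (G k) := by
        simp only [hG_def]
        exact (hMn.const_mul 2).const_add (1 - C.γ)
      have hxh : ∀ i, Measurable[C.histσ k] (C.x k i) := by
        intro i
        rw [measurable_iff_comap_le]
        refine le_trans ?_ le_sup_left
        exact le_iSup_of_le k (le_iSup_of_le le_rfl (le_iSup_of_le i le_sup_left))
      have hDh : Measurable[C.histσ k] (fun ω => vdiam (C.y k s ω)) := by
        unfold vdiam CBOData.y
        exact (measurable_isup' fun i => (measurable_pi_apply s).comp ((WithLp.measurable_ofLp 2 _).comp (hxh i))).sub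
          (measurable_iinf' fun i => (measurable_pi_apply s).comp ((WithLp.measurable_ofLp 2 _).comp (hxh i)))
      rw [IndepFun_iff_Indep]
      exact indep_of_indep_of_le_right
        (indep_of_indep_of_le_left (hC.η_indep_hist k) (measurable_iff_comap_le.1 hGn))
        (measurable_iff_comap_le.1 hDh)
    intro k
    induction k with
    | zero => exact ⟨hint s, by simp⟩
    | succ k ih =>
      obtain ⟨hDk_int, hDk_le⟩ := ih
      have hGD_int : Integrable (fun ω => G k ω * vdiam (C.y k s ω)) P :=
        (hindep k).integrable_mul (hGint k) hDk_int
      have hDk1_int : Integrable (fun ω => vdiam (C.y (k+1) s ω)) P := by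
        refine Integrable.mono' hGD_int (hD_meas (k+1) s).aestronglyMeasurable
          (ae_of_all _ fun ω => ?_)
        rw [Real.norm_eq_abs, abs_of_nonneg (vdiam_nonneg _)]
        exact hcontr k ω
      refine ⟨hDk1_int, ?_⟩
      have hE0 : 0 ≤ ∫ ω, vdiam (C.y 0 s ω) ∂P :=
        integral_nonneg fun ω => vdiam_nonneg _
      have hEk : 0 ≤ ∫ ω, vdiam (C.y k s ω) ∂P :=
        integral_nonneg fun ω => vdiam_nonneg _
      calc ∫ ω, vdiam (C.y (k+1) s ω) ∂P
          ≤ ∫ ω, G k ω * vdiam (C.y k s ω) ∂P :=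
            integral_mono hDk1_int hGD_int (hcontr k)
        _ = (∫ ω, G k ω ∂P) * ∫ ω, vdiam (C.y k s ω) ∂P :=
            (hindep k).integral_fun_mul_eq_mul_integral (hGint k).aestronglyMeasurable
              hDk_int.aestronglyMeasurable
        _ ≤ C.th * (C.th ^ k * ∫ ω, vdiam (C.y 0 s ω) ∂P) :=
            mul_le_mul (hGE k) hDk_le hEk hθ0.le
        _ = C.th ^ (k+1) * ∫ ω, vdiam (C.y 0 s ω) ∂P := by ring
  -- part (i)
  have hi : ∀ s : Fin d,
      Tendsto (fun k => ∫ ω, vdiam (C.y k s ω) ∂P) atTop (nhds 0) := by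
    intro s
    have hE0 : 0 ≤ ∫ ω, vdiam (C.y 0 s ω) ∂P := integral_nonneg fun ω => vdiam_nonneg _
    have htend : Tendsto (fun k : ℕ => C.th ^ k * ∫ ω, vdiam (C.y 0 s ω) ∂P) atTop (nhds 0) := by
      have := (tendsto_pow_atTop_nhds_zero_of_lt_one hθ0.le hθ).mul_const
        (∫ ω, vdiam (C.y 0 s ω) ∂P)
      simpa using this
    exact squeeze_zero (fun k => integral_nonneg fun ω => vdiam_nonneg _)
      (fun k => (main s k).2) htend
  -- part (ii)
  have hii : ∀ s : Fin d, ∀ᵐ ω ∂P,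
      Tendsto (fun k => vdiam (C.y k s ω)) atTop (nhds 0) := by
    intro s
    set E0 := ∫ ω, vdiam (C.y 0 s ω) ∂P with hE0_def
    have hE0 : 0 ≤ E0 := integral_nonneg fun ω => vdiam_nonneg _
    have hsummable : Summable (fun k : ℕ => C.th ^ k * E0) :=
      (summable_geometric_of_lt_one hθ0.le hθ).mul_right E0
    have hsum : ∑' k : ℕ, ENNReal.ofReal (∫ ω, vdiam (C.y k s ω) ∂P) ≠ ⊤ := by
      have hle : ∀ k : ℕ, ENNReal.ofReal (∫ ω, vdiam (C.y k s ω) ∂P)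
          ≤ ENNReal.ofReal (C.th ^ k * E0) := fun k => ENNReal.ofReal_le_ofReal (main s k).2
      have heq := ENNReal.ofReal_tsum_of_nonneg
        (fun k : ℕ => by positivity : ∀ k : ℕ, 0 ≤ C.th ^ k * E0) hsummable
      have : ∑' k : ℕ, ENNReal.ofReal (∫ ω, vdiam (C.y k s ω) ∂P)
          ≤ ENNReal.ofReal (∑' k : ℕ, C.th ^ k * E0) := by
        rw [heq]; exact ENNReal.tsum_le_tsum hle
      exact ne_top_of_le_ne_top ENNReal.ofReal_ne_top this
    have hlin : ∫⁻ ω, (∑' k : ℕ, ENNReal.ofReal (vdiam (C.y k s ω))) ∂P ≠ ⊤ := by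
      rw [lintegral_tsum (fun k => ((hD_meas k s).ennreal_ofReal.aemeasurable))]
      have heach : ∀ k : ℕ, ∫⁻ ω, ENNReal.ofReal (vdiam (C.y k s ω)) ∂P
          = ENNReal.ofReal (∫ ω, vdiam (C.y k s ω) ∂P) := fun k =>
        (MeasureTheory.ofReal_integral_eq_lintegral_ofReal (main s k).1
          (ae_of_all _ fun ω => vdiam_nonneg _)).symm
      rw [tsum_congr heach]
      exact hsum
    have hae : ∀ᵐ ω ∂P, (∑' k : ℕ, ENNReal.ofReal (vdiam (C.y k s ω))) < ⊤ :=
      ae_lt_top (Measurable.ennreal_tsum fun k => (hD_meas k s).ennreal_ofReal) hlin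
    filter_upwards [hae] with ω hω
    have h0 := ENNReal.tendsto_atTop_zero_of_tsum_ne_top hω.ne
    have h1 := (ENNReal.tendsto_toReal (ENNReal.zero_ne_top)).comp h0
    have h2 : (fun k : ℕ => (ENNReal.ofReal (vdiam (C.y k s ω))).toReal)
        = fun k => vdiam (C.y k s ω) := by
      funext k; exact ENNReal.toReal_ofReal (vdiam_nonneg _)
    rw [show ENNReal.toReal 0 = 0 from rfl] at h1
    rwa [← h2]
  refine ⟨hi, hii, ?_⟩
  -- part (iii)
  have hall := (ae_all_iff).2 hii
  filter_upwards [hall] with ω hω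
  have hub : ∀ k, (⨆ i : Fin N, ⨆ j : Fin N, ⨆ s : Fin d, |C.x k i ω s - C.x k j ω s|)
      ≤ ∑ s' : Fin d, vdiam (C.y k s' ω) := by
    intro k
    refine ciSup_le fun i => ciSup_le fun j => ciSup_le fun s' => ?_
    have h1 : |C.x k i ω s' - C.x k j ω s'| ≤ vdiam (C.y k s' ω) :=
      abs_sub_le_vdiam (C.y k s' ω) i j
    exact h1.trans (Finset.single_le_sum (f := fun t => vdiam (C.y k t ω))
      (fun t _ => vdiam_nonneg _) (Finset.mem_univ s'))
  have hlb : ∀ k, 0 ≤ ⨆ i : Fin N, ⨆ j : Fin N, ⨆ s : Fin d, |C.x k i ω s - C.x k j ω s| := by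
    intro k
    have i0 : Fin N := Classical.arbitrary _
    have s0 : Fin d := Classical.arbitrary _
    calc (0:ℝ) ≤ |C.x k i0 ω s0 - C.x k i0 ω s0| := abs_nonneg _
      _ ≤ ⨆ s' : Fin d, |C.x k i0 ω s' - C.x k i0 ω s'| :=
          le_ciSup (f := fun s' => |C.x k i0 ω s' - C.x k i0 ω s'|)
            ((Set.finite_range _).bddAbove) s0
      _ ≤ ⨆ j : Fin N, ⨆ s' : Fin d, |C.x k i0 ω s' - C.x k j ω s'| :=
          le_ciSup (f := fun j => ⨆ s' : Fin d, |C.x k i0 ω s' - C.x k j ω s'|)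
            ((Set.finite_range _).bddAbove) i0
      _ ≤ ⨆ i : Fin N, ⨆ j : Fin N, ⨆ s' : Fin d, |C.x k i ω s' - C.x k j ω s'| :=
          le_ciSup (f := fun i => ⨆ j : Fin N, ⨆ s' : Fin d, |C.x k i ω s' - C.x k j ω s'|)
            ((Set.finite_range _).bddAbove) i0
  have hsumt : Tendsto (fun k => ∑ s' : Fin d, vdiam (C.y k s' ω)) atTop (nhds 0) := by
    have := tendsto_finset_sum (Finset.univ : Finset (Fin d)) (fun s' _ => hω s')
    simpa using this
  exact squeeze_zero hlb hub hsumt
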